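/- Let m, n, d be positive integers, A ∈ ℝ^{m×n}, B ∈ ℝ^{m×d}, and C = [A, B] ∈ ℝ^{m×(n+d)}. Then the optimal value of the total least squares problem equals the optimal value of rank-n approximation: inf over Â ∈ ℝ^{m×n} and X ∈ ℝ^{n×d} of ‖[Â, ÂX] − C‖_F equals inf over C' ∈ ℝ^{m×(n+d)} with rank(C') ≤ n of ‖C' − C‖_F. -/

import Mathlib

open Matrix

/-- The Frobenius norm of a real matrix. -/
noncomputable def frobNorm {m n : Type*} [Fintype m] [Fintype n]
    (M : Matrix m n ℝ) : ℝ :=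
  Real.sqrt (∑ i, ∑ j, (M i j) ^ 2)

noncomputable def flatTLS {m n : Type*} [Fintype m] [Fintype n]
    (M : Matrix m n ℝ) : EuclideanSpace ℝ (m × n) := WithLp.toLp 2 (fun p : m × n => M p.1 p.2)

lemma frobNorm_eq_norm {m n : Type*} [Fintype m] [Fintype n] (M : Matrix m n ℝ) :
    frobNorm M = ‖flatTLS M‖ := by
  rw [EuclideanSpace.norm_eq]
  simp [frobNorm, Fintype.sum_prod_type, Real.norm_eq_abs, sq_abs, flatTLS]

lemma frobNorm_nonneg {m n : Type*} [Fintype m] [Fintype n] (M : Matrix m n ℝ) :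
    0 ≤ frobNorm M := Real.sqrt_nonneg _

lemma frobNorm_sub_le {m n : Type*} [Fintype m] [Fintype n] (M N P : Matrix m n ℝ) :
    frobNorm (M - P) ≤ frobNorm (M - N) + frobNorm (N - P) := by
  have h1 : flatTLS (M - P) = flatTLS M - flatTLS P := rfl
  have h2 : flatTLS (M - N) = flatTLS M - flatTLS N := rfl
  have h3 : flatTLS (N - P) = flatTLS N - flatTLS P := rfl
  rw [frobNorm_eq_norm, frobNorm_eq_norm, frobNorm_eq_norm, h1, h2, h3]
  exact norm_sub_le_norm_sub_add_norm_sub _ _ _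

lemma frobNorm_smul {m n : Type*} [Fintype m] [Fintype n] (t : ℝ) (M : Matrix m n ℝ) :
    frobNorm (t • M) = |t| * frobNorm M := by
  have h : flatTLS (t • M) = t • flatTLS M := rfl
  rw [frobNorm_eq_norm, frobNorm_eq_norm, h, norm_smul, Real.norm_eq_abs]

lemma sum_dite_fin {n r : ℕ} (hr : r ≤ n) (F : Fin r → ℝ) :
    (∑ j : Fin n, if h : (j : ℕ) < r then F ⟨j, h⟩ else 0) = ∑ j : Fin r, F j := by
  rw [← Finset.sum_subset (Finset.subset_univ (Finset.univ.map (Fin.castLEEmb hr)))]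
  · rw [Finset.sum_map]
    apply Finset.sum_congr rfl
    intro j _
    simp [Fin.castLEEmb, Fin.castLE]
  · intro x _ hx
    rw [dif_neg]
    intro hlt
    apply hx
    simp only [Finset.mem_map, Finset.mem_univ, true_and]
    exact ⟨⟨x, hlt⟩, by simp [Fin.castLEEmb, Fin.ext_iff]⟩

lemma exists_rank_factorization {m n : ℕ} {k : Type*} [Fintype k] [DecidableEq k]
    (M : Matrix (Fin m) k ℝ) (h : M.rank ≤ n) :
    ∃ (Y : Matrix (Fin m) (Fin n) ℝ) (Z : Matrix (Fin n) k ℝ), M = Y * Z := by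
  set V := LinearMap.range M.mulVecLin with hV
  have hr : Module.finrank ℝ V ≤ n := h
  set r := Module.finrank ℝ V with hrdef
  let b : Module.Basis (Fin r) ℝ V := Module.finBasis ℝ V
  have colmem : ∀ c : k, (fun i => M i c) ∈ V := by
    intro c
    refine ⟨Pi.single c 1, ?_⟩
    ext i
    simp [Matrix.mulVecLin_apply, Matrix.mulVec_single]
  let col : k → V := fun c => ⟨fun i => M i c, colmem c⟩
  refine ⟨Matrix.of fun i j => if h : (j : ℕ) < r then ((b ⟨j, h⟩ : Fin m → ℝ) i) else 0,
    Matrix.of fun j c => if h : (j : ℕ) < r then b.repr (col c) ⟨j, h⟩ else 0, ?_⟩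
  ext i c
  symm
  rw [Matrix.mul_apply]
  have hcol : (∑ j : Fin r, (b.repr (col c) j) * ((b j : Fin m → ℝ) i)) = M i c := by
    have := congrArg (fun v : V => (v : Fin m → ℝ) i) (b.sum_repr (col c))
    simp only [Submodule.coe_sum, Submodule.coe_smul, Finset.sum_apply, Pi.smul_apply,
      smul_eq_mul] at this
    exact this
  rw [← hcol, ← sum_dite_fin hr (fun j => (b.repr (col c) j) * ((b j : Fin m → ℝ) i))]
  apply Finset.sum_congr rfl
  intro j _
  by_cases hj : (j : ℕ) < r
  · simp [hj, mul_comm]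
  · simp [hj]

lemma det_add_smul_one_eval {n : ℕ} (Z1 : Matrix (Fin n) (Fin n) ℝ) (t : ℝ) :
    ((-Z1).charpoly).eval t = (Z1 + t • 1).det := by
  rw [Matrix.charpoly, ← Polynomial.coe_evalRingHom, RingHom.map_det]
  congr 1
  ext i j
  by_cases h : i = j
  · subst h; simp [charmatrix_apply, Matrix.one_apply, add_comm]
  · simp [charmatrix_apply_ne _ _ _ h, Matrix.one_apply, h]

lemma exists_small_invertible_pert {n : ℕ} (Z1 : Matrix (Fin n) (Fin n) ℝ) {δ : ℝ}
    (hδ : 0 < δ) : ∃ t : ℝ, 0 < t ∧ t < δ ∧ IsUnit (Z1 + t • 1).det := by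
  have hne : (-Z1).charpoly ≠ 0 := ((-Z1).charpoly_monic).ne_zero
  have hfin : {x : ℝ | ((-Z1).charpoly).IsRoot x}.Finite := Polynomial.finite_setOf_isRoot hne
  have hinf : (Set.Ioo (0:ℝ) δ).Infinite := Set.Ioo_infinite hδ
  obtain ⟨t, ht⟩ := (hinf.diff hfin).nonempty
  refine ⟨t, ht.1.1, ht.1.2, ?_⟩
  rw [isUnit_iff_ne_zero, ← det_add_smul_one_eval]
  exact ht.2

lemma tls_approx {m n d : ℕ} (C' : Matrix (Fin m) (Fin n ⊕ Fin d) ℝ) (h : C'.rank ≤ n)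
    {ε : ℝ} (hε : 0 < ε) :
    ∃ (Ahat : Matrix (Fin m) (Fin n) ℝ) (X : Matrix (Fin n) (Fin d) ℝ),
      frobNorm (Matrix.fromCols Ahat (Ahat * X) - C') ≤ ε := by
  obtain ⟨Y, Z, hYZ⟩ := exists_rank_factorization C' h
  set Z1 := Z.toCols₁ with hZ1
  set Z2 := Z.toCols₂ with hZ2
  set K := frobNorm (Matrix.fromCols Y (0 : Matrix (Fin m) (Fin d) ℝ)) with hKdef
  have hK : 0 ≤ K := frobNorm_nonneg _
  have hδ : 0 < ε / (K + 1) := by positivity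
  obtain ⟨t, ht0, htδ, hunit⟩ := exists_small_invertible_pert Z1 hδ
  set S := Z1 + t • 1 with hS
  refine ⟨Y * S, S⁻¹ * Z2, ?_⟩
  have hAX : Y * S * (S⁻¹ * Z2) = Y * Z2 := by
    rw [Matrix.mul_assoc, ← Matrix.mul_assoc S, Matrix.mul_nonsing_inv _ hunit, Matrix.one_mul]
  have hC' : C' = Matrix.fromCols (Y * Z1) (Y * Z2) := by
    rw [hYZ, hZ1, hZ2, ← Matrix.mul_fromCols, Matrix.fromCols_toCols]
  have h1 : Y * S - Y * Z1 = t • Y := by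
    rw [hS, Matrix.mul_add, Matrix.mul_smul, Matrix.mul_one, add_sub_cancel_left]
  have hdiff : Matrix.fromCols (Y * S) (Y * S * (S⁻¹ * Z2)) - C' =
      t • Matrix.fromCols Y (0 : Matrix (Fin m) (Fin d) ℝ) := by
    rw [hAX, hC']
    ext i j
    cases j with
    | inl j =>
      have := congrFun (congrFun h1 i) j
      simpa [Matrix.fromCols] using this
    | inr j => simp [Matrix.fromCols]
  calc frobNorm (Matrix.fromCols (Y * S) (Y * S * (S⁻¹ * Z2)) - C')
      = |t| * K := by rw [hdiff, frobNorm_smul]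
    _ = t * K := by rw [abs_of_pos ht0]
    _ ≤ ε := by
        have h2 : t * (K + 1) < ε := (lt_div_iff₀ (by positivity : (0:ℝ) < K + 1)).mp htδ
        nlinarith [h2, hK, ht0]

/-- The optimal value of the total least squares problem equals the optimal
value of rank-`n` approximation of `C = [A, B]`. -/
theorem total_least_squares_eq_low_rank_approx
    (m n d : ℕ) (hm : 0 < m) (hn : 0 < n) (hd : 0 < d)
    (A : Matrix (Fin m) (Fin n) ℝ) (B : Matrix (Fin m) (Fin d) ℝ) :
    sInf {c : ℝ | ∃ (Ahat : Matrix (Fin m) (Fin n) ℝ) (X : Matrix (Fin n) (Fin d) ℝ),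
        c = frobNorm (Matrix.fromCols Ahat (Ahat * X) - Matrix.fromCols A B)} =
    sInf {c : ℝ | ∃ C' : Matrix (Fin m) (Fin n ⊕ Fin d) ℝ, C'.rank ≤ n ∧
        c = frobNorm (C' - Matrix.fromCols A B)} := by
  set C := Matrix.fromCols A B with hC
  set S1 := {c : ℝ | ∃ (Ahat : Matrix (Fin m) (Fin n) ℝ) (X : Matrix (Fin n) (Fin d) ℝ),
      c = frobNorm (Matrix.fromCols Ahat (Ahat * X) - C)} with hS1
  set S2 := {c : ℝ | ∃ C' : Matrix (Fin m) (Fin n ⊕ Fin d) ℝ, C'.rank ≤ n ∧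
      c = frobNorm (C' - C)} with hS2
  have hne1 : S1.Nonempty := ⟨_, A, 0, rfl⟩
  have hne2 : S2.Nonempty := ⟨_, 0, by simp [hn.le], rfl⟩
  have hbdd1 : BddBelow S1 := by
    refine ⟨0, fun c hc => ?_⟩
    obtain ⟨Ahat, X, rfl⟩ := hc
    exact frobNorm_nonneg _
  have hbdd2 : BddBelow S2 := by
    refine ⟨0, fun c hc => ?_⟩
    obtain ⟨C', _, rfl⟩ := hc
    exact frobNorm_nonneg _
  have hsub : S1 ⊆ S2 := by
    rintro c ⟨Ahat, X, rfl⟩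
    refine ⟨Matrix.fromCols Ahat (Ahat * X), ?_, rfl⟩
    have heq : Matrix.fromCols Ahat (Ahat * X) =
        Ahat * Matrix.fromCols (1 : Matrix (Fin n) (Fin n) ℝ) X := by
      rw [Matrix.mul_fromCols, Matrix.mul_one]
    rw [heq]
    exact (Matrix.rank_mul_le_left _ _).trans (Matrix.rank_le_width Ahat)
  refine le_antisymm ?_ (csInf_le_csInf hbdd2 hne1 hsub)
  apply le_csInf hne2
  rintro c ⟨C', hrank, rfl⟩
  apply le_of_forall_pos_le_add
  intro ε hε
  obtain ⟨Ahat, X, happrox⟩ := tls_approx C' hrank hε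
  have hmem : frobNorm (Matrix.fromCols Ahat (Ahat * X) - C) ∈ S1 := ⟨Ahat, X, rfl⟩
  refine (csInf_le hbdd1 hmem).trans ?_
  calc frobNorm (Matrix.fromCols Ahat (Ahat * X) - C)
      ≤ frobNorm (Matrix.fromCols Ahat (Ahat * X) - C') + frobNorm (C' - C) :=
        frobNorm_sub_le _ _ _
    _ ≤ ε + frobNorm (C' - C) := by linarith
    _ = frobNorm (C' - C) + ε := add_comm _ _
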